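/- Let F be a finite field, d ≥ 1, and let A : (Fin d)³ → F be a 3-cube that is nonsingular, i.e., for all nonzero vectors x, y ∈ F^d the vector whose k-th coordinate is Σ_{i,j} A(i,j,k)·xᵢ·yⱼ is nonzero. Then for every permutation σ of the three index positions, the permuted 3-cube A^σ defined by A^σ(i₁,i₂,i₃) = A(i_{σ(1)}, i_{σ(2)}, i_{σ(3)}) is also nonsingular. -/

import Mathlib

/-- A 3-cube of size `d` over `F` (indexed as a function on triples `Fin 3 → Fin d`)
is nonsingular if for all nonzero vectors `x, y` the vector
`k ↦ ∑ i j, A (i,j,k) * x i * y j` is nonzero. -/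
def CubeNonsingular {F : Type*} [Field F] {d : ℕ} (A : (Fin 3 → Fin d) → F) : Prop :=
  ∀ x y : Fin d → F, x ≠ 0 → y ≠ 0 →
    (fun k => ∑ i, ∑ j, A ![i, j, k] * x i * y j) ≠ 0

section Aux

set_option linter.unusedSectionVars false

variable {F : Type*} [Field F] [Fintype F] {d : ℕ}

private lemma comp_swap01 (i j k : Fin d) :
    (![i, j, k] ∘ Equiv.swap (0 : Fin 3) 1) = ![j, i, k] := by
  funext m
  fin_cases m <;> simp [Equiv.swap_apply_def]

private lemma comp_swap12 (i j k : Fin d) :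
    (![i, j, k] ∘ Equiv.swap (1 : Fin 3) 2) = ![i, k, j] := by
  funext m
  fin_cases m <;> simp [Equiv.swap_apply_def]

private lemma perm01 (A : (Fin 3 → Fin d) → F) (hA : CubeNonsingular A) :
    CubeNonsingular (fun v => A (v ∘ Equiv.swap (0 : Fin 3) 1)) := by
  intro x y hx hy h
  refine hA y x hy hx ?_
  funext k
  have hk := congrFun h k
  simp only [comp_swap01] at hk
  rw [Finset.sum_comm] at hk
  simpa [mul_comm, mul_left_comm, mul_assoc] using hk

private lemma perm12 (A : (Fin 3 → Fin d) → F) (hA : CubeNonsingular A) :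
    CubeNonsingular (fun v => A (v ∘ Equiv.swap (1 : Fin 3) 2)) := by
  intro x y hx hy h
  simp only [comp_swap12] at h
  -- h : (fun k => ∑ i, ∑ j, A ![i, k, j] * x i * y j) = 0
  set f : (Fin d → F) → (Fin d → F) :=
    fun w k => ∑ i, ∑ j, A ![i, j, k] * x i * w j with hf
  have hinj : Function.Injective f := by
    intro w w' hww
    by_contra hne
    have hsub : w - w' ≠ 0 := sub_ne_zero.mpr hne
    refine hA x (w - w') hx hsub ?_
    funext k
    have h1 := congrFun hww k
    simp only [hf] at h1
    simp only [Pi.sub_apply, mul_sub, Finset.sum_sub_distrib, Pi.zero_apply]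
    rw [h1, sub_self]
  have hsurj : Function.Surjective f := Finite.injective_iff_surjective.mp hinj
  have hzero : ∀ j : Fin d, ∑ i, ∑ m, A ![i, j, m] * x i * y m = 0 := by
    intro j
    have := congrFun h j
    simpa using this
  -- key : for every w, ⟨f w, y⟩ = 0
  have key : ∀ w : Fin d → F, ∑ m, f w m * y m = 0 := by
    intro w
    calc ∑ m, f w m * y m
        = ∑ m, ∑ i, ∑ j, A ![i, j, m] * x i * w j * y m := by
          simp only [hf, Finset.sum_mul]
      _ = ∑ i, ∑ m, ∑ j, A ![i, j, m] * x i * w j * y m := Finset.sum_comm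
      _ = ∑ i, ∑ j, ∑ m, A ![i, j, m] * x i * w j * y m :=
          Finset.sum_congr rfl fun i _ => Finset.sum_comm
      _ = ∑ j, ∑ i, ∑ m, A ![i, j, m] * x i * w j * y m := Finset.sum_comm
      _ = ∑ j, (∑ i, ∑ m, A ![i, j, m] * x i * y m) * w j := by
          refine Finset.sum_congr rfl fun j _ => ?_
          simp only [Finset.sum_mul]
          refine Finset.sum_congr rfl fun i _ => Finset.sum_congr rfl fun m _ => ?_
          ring
      _ = 0 := Finset.sum_eq_zero fun j _ => by rw [hzero j, zero_mul]
  -- choose k0 with y k0 ≠ 0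
  obtain ⟨k0, hk0⟩ := Function.ne_iff.mp hy
  simp only [Pi.zero_apply] at hk0
  obtain ⟨w, hw⟩ := hsurj (Pi.single k0 1)
  have hcon := key w
  rw [hw] at hcon
  simp [Pi.single_apply, Finset.sum_ite_eq'] at hcon
  exact hk0 hcon

private lemma perm_comp (A : (Fin 3 → Fin d) → F) (τ π : Equiv.Perm (Fin 3)) :
    (fun v => A (v ∘ (τ * π))) = (fun v => (fun w => A (w ∘ π)) (v ∘ τ)) := by
  funext v
  have hcomp : v ∘ ⇑(τ * π) = (v ∘ ⇑τ) ∘ ⇑π := by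
    funext i
    simp [Equiv.Perm.mul_apply]
  exact congrArg A hcomp

private lemma perm_swap (a b : Fin 3) (hab : a ≠ b)
    (A : (Fin 3 → Fin d) → F) (hA : CubeNonsingular A) :
    CubeNonsingular (fun v => A (v ∘ Equiv.swap a b)) := by
  have h02 : ∀ B : (Fin 3 → Fin d) → F, CubeNonsingular B →
      CubeNonsingular (fun v => B (v ∘ Equiv.swap (0 : Fin 3) 2)) := by
    intro B hB
    have he : ∀ i : Fin 3,
        Equiv.swap (0 : Fin 3) 2 i
          = Equiv.swap (0 : Fin 3) 1 (Equiv.swap (1 : Fin 3) 2 (Equiv.swap (0 : Fin 3) 1 i)) := by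
      decide
    have key := perm01 _ (perm12 _ (perm01 _ hB))
    have heq : (fun v : Fin 3 → Fin d => B (v ∘ Equiv.swap (0 : Fin 3) 2))
        = (fun v => (fun w => (fun u => B (u ∘ Equiv.swap (0 : Fin 3) 1))
            (w ∘ Equiv.swap (1 : Fin 3) 2)) (v ∘ Equiv.swap (0 : Fin 3) 1)) := by
      funext v
      show B (v ∘ Equiv.swap (0 : Fin 3) 2)
          = B (((v ∘ Equiv.swap (0 : Fin 3) 1) ∘ Equiv.swap (1 : Fin 3) 2)
              ∘ Equiv.swap (0 : Fin 3) 1)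
      congr 1
      funext i
      exact congrArg v (he i)
    rw [heq]
    exact key
  fin_cases a <;> fin_cases b <;> simp_all <;>
    first
      | exact perm01 A hA
      | exact perm12 A hA
      | exact h02 A hA
      | (rw [Equiv.swap_comm]; first
          | exact perm01 A hA
          | exact perm12 A hA
          | exact h02 A hA)

end Aux

/-- Permuting the three index positions of a nonsingular 3-cube over a finite field
yields a nonsingular 3-cube. -/
theorem cubeNonsingular_perm {F : Type*} [Field F] [Fintype F] {d : ℕ} (hd : 1 ≤ d)
    (A : (Fin 3 → Fin d) → F) (hA : CubeNonsingular A) (σ : Equiv.Perm (Fin 3)) :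
    CubeNonsingular (fun v => A (v ∘ σ)) := by
  have H : ∀ τ : Equiv.Perm (Fin 3), ∀ B : (Fin 3 → Fin d) → F,
      CubeNonsingular B → CubeNonsingular (fun v => B (v ∘ τ)) := by
    intro τ
    refine Equiv.Perm.swap_induction_on'
      (motive := fun π => ∀ B : (Fin 3 → Fin d) → F,
        CubeNonsingular B → CubeNonsingular (fun v => B (v ∘ π))) τ ?_ ?_
    · intro B hB
      simpa using hB
    · intro f a b hab ih B hB
      have h1 := ih _ (perm_swap a b hab B hB)
      rw [perm_comp B f (Equiv.swap a b)]
      exact h1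
  exact H σ A hA
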